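/- Random-XZ measurements are tomographically complete on real pure states: if |ψ⟩ and |φ⟩ are n-qubit unit vectors with all real coefficients in the computational basis, and for every product unitary U = ⊗_i U^{α_i} with α_i ∈ {X,Z} (U^Z = I, U^X = Hadamard) and every bit-string b one has |⟨b|U|ψ⟩|² = |⟨b|U|φ⟩|², then |ψ⟩⟨ψ| = |φ⟩⟨φ| (equivalently |ψ⟩ = ±|φ⟩). -/

import Mathlib

open Matrix

noncomputable section

/-- Hadamard matrix. -/
def Hm : Matrix (Fin 2) (Fin 2) ℂ := ((Real.sqrt 2 : ℂ))⁻¹ • !![1, 1; 1, -1]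

/-- The product measurement unitary `U = ⊗_i U^{α_i}` with `U^X = H`, `U^Z = I`. -/
def Umeas (n : ℕ) (α : Fin n → Bool) :
    Matrix (Fin n → Fin 2) (Fin n → Fin 2) ℂ :=
  fun b b' => ∏ i, (if α i then Hm else 1) (b i) (b' i)

lemma umeas_mulVec_cons (n : ℕ) (a : Bool) (α : Fin n → Bool) (ψ : (Fin (n+1) → Fin 2) → ℂ)
    (j : Fin 2) (b : Fin n → Fin 2) :
    (Umeas (n+1) (Fin.cons a α)).mulVec ψ (Fin.cons j b)
      = ∑ k : Fin 2, (if a then Hm else 1) j k *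
          (Umeas n α).mulVec (fun c => ψ (Fin.cons k c)) b := by
  simp only [Matrix.mulVec, dotProduct, Umeas]
  rw [← (Fin.consEquiv (fun _ => Fin 2)).sum_comp]
  rw [Fintype.sum_prod_type]
  refine Finset.sum_congr rfl fun k _ => ?_
  rw [Finset.mul_sum]
  refine Finset.sum_congr rfl fun c _ => ?_
  simp only [Fin.consEquiv_apply, Fin.prod_univ_succ, Fin.cons_zero, Fin.cons_succ]
  rw [show (Fin.consEquiv fun _ => Fin 2) (k, c) = Fin.cons k c from rfl]
  ring

lemma fin2_cases (k : Fin 2) : k = 0 ∨ k = 1 := by omega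

/-- Key algebra lemma: from equality of the two diagonal outer-product blocks and the
symmetrized off-diagonal block, deduce equality of the off-diagonal block. -/
lemma key_alg {I : Type*} (u v u' v' : I → ℂ)
    (h1 : ∀ c c', u c * u c' = u' c * u' c')
    (h2 : ∀ c c', v c * v c' = v' c * v' c')
    (h3 : ∀ c c', u c * v c' + v c * u c' = u' c * v' c' + v' c * u' c') :
    ∀ c c', u c * v c' = u' c * v' c' := by
  by_cases hu : ∀ c, u c = 0
  · have hu' : ∀ c, u' c = 0 := by
      intro c
      have := h1 c c
      rw [hu c, zero_mul] at this
      exact mul_self_eq_zero.mp this.symm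
    intro c c'; rw [hu c, hu' c, zero_mul, zero_mul]
  by_cases hv : ∀ c, v c = 0
  · have hv' : ∀ c, v' c = 0 := by
      intro c
      have := h2 c c
      rw [hv c, zero_mul] at this
      exact mul_self_eq_zero.mp this.symm
    intro c c'; rw [hv c', hv' c', mul_zero, mul_zero]
  push_neg at hu hv
  obtain ⟨c₀, hc₀⟩ := hu
  obtain ⟨c₁, hc₁⟩ := hv
  have hc₀' : u' c₀ ≠ 0 := by
    intro h0
    have := h1 c₀ c₀
    rw [h0, zero_mul] at this
    exact hc₀ (mul_self_eq_zero.mp this)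
  have hc₁' : v' c₁ ≠ 0 := by
    intro h0
    have := h2 c₁ c₁
    rw [h0, zero_mul] at this
    exact hc₁ (mul_self_eq_zero.mp this)
  set s : ℂ := u' c₀ / u c₀ with hs
  set t : ℂ := v' c₁ / v c₁ with ht
  have hsc : u' c₀ = s * u c₀ := ((eq_div_iff hc₀).mp hs).symm
  have htc : v' c₁ = t * v c₁ := ((eq_div_iff hc₁).mp ht).symm
  have hss : s * s = 1 := by
    have h := h1 c₀ c₀
    rw [hs, div_mul_div_comm, div_eq_one_iff_eq (mul_ne_zero hc₀ hc₀)]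
    exact h.symm
  have htt : t * t = 1 := by
    have h := h2 c₁ c₁
    rw [ht, div_mul_div_comm, div_eq_one_iff_eq (mul_ne_zero hc₁ hc₁)]
    exact h.symm
  have hus : ∀ c, u' c = s * u c := by
    intro c
    have e : u c * u c₀ = (u' c * s) * u c₀ := by
      linear_combination h1 c c₀ + u' c * hsc
    have e2 : u c = u' c * s := mul_right_cancel₀ hc₀ e
    linear_combination (-s) * e2 + (-(u' c)) * hss
  have hvt : ∀ c, v' c = t * v c := by
    intro c
    have e : v c * v c₁ = (v' c * t) * v c₁ := by
      linear_combination h2 c c₁ + v' c * htc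
    have e2 : v c = v' c * t := mul_right_cancel₀ hc₁ e
    linear_combination (-t) * e2 + (-(v' c)) * htt
  by_cases hst : s * t = 1
  · intro c c'
    rw [hus c, hvt c']
    linear_combination (-(u c * v c')) * hst
  · exfalso
    have hz : ∀ c c', u c * v c' + v c * u c' = 0 := by
      intro c c'
      have h := h3 c c'
      rw [hus c, hus c', hvt c, hvt c'] at h
      have h' : (1 - s * t) * (u c * v c' + v c * u c') = 0 := by linear_combination h
      rcases mul_eq_zero.mp h' with h'' | h''
      · exact absurd (by linear_combination -h'' : s * t = 1) hst
      · exact h''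
    have hvc₀ : v c₀ = 0 := by
      have hd : u c₀ * v c₀ = 0 := by linear_combination (hz c₀ c₀) / 2
      rcases mul_eq_zero.mp hd with h' | h'
      · exact absurd h' hc₀
      · exact h'
    have hvc₁ : v c₁ = 0 := by
      have h := hz c₀ c₁
      rw [hvc₀] at h
      have h2' : u c₀ * v c₁ = 0 := by linear_combination h
      rcases mul_eq_zero.mp h2' with h' | h'
      · exact absurd h' hc₀
      · exact h'
    exact hc₁ hvc₁

lemma real_mul_self (z : ℂ) (hz : z.im = 0) : z * z = (Complex.normSq z : ℂ) := by
  have hc : (starRingEnd ℂ) z = z := Complex.conj_eq_iff_im.mpr hz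
  calc z * z = z * (starRingEnd ℂ) z := by rw [hc]
    _ = (Complex.normSq z : ℂ) := Complex.mul_conj z

lemma normSq_sqrt2_inv_mul (z : ℂ) :
    Complex.normSq (((Real.sqrt 2 : ℂ))⁻¹ * z) = (1/2) * Complex.normSq z := by
  rw [Complex.normSq_mul, Complex.normSq_inv]
  norm_num [Complex.normSq_ofReal, Real.mul_self_sqrt]

lemma aux : ∀ (n : ℕ) (ψ φ : (Fin n → Fin 2) → ℂ),
    (∀ b, (ψ b).im = 0) → (∀ b, (φ b).im = 0) →
    (∀ α b, Complex.normSq ((Umeas n α).mulVec ψ b)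
          = Complex.normSq ((Umeas n α).mulVec φ b)) →
    ∀ b b', ψ b * ψ b' = φ b * φ b' := by
  intro n
  induction n with
  | zero =>
    intro ψ φ hψr hφr h b b'
    have hm : ∀ (χ : (Fin 0 → Fin 2) → ℂ) (α : Fin 0 → Bool) (b : Fin 0 → Fin 2),
        (Umeas 0 α).mulVec χ b = χ b := by
      intro χ α b
      simp only [Matrix.mulVec, dotProduct, Umeas, Finset.univ_eq_empty, Finset.prod_empty,
        one_mul]
      rw [Fintype.sum_unique]
      congr 1
      exact Subsingleton.elim _ _
    have key := h (fun _ => false) b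
    rw [hm, hm] at key
    have hb : b' = b := Subsingleton.elim _ _
    rw [hb, real_mul_self (ψ b) (hψr b), real_mul_self (φ b) (hφr b), key]
  | succ n ih =>
    intro ψ φ hψr hφr h
    -- diagonal blocks
    have hdiag : ∀ (j : Fin 2) (c c' : Fin n → Fin 2),
        ψ (Fin.cons j c) * ψ (Fin.cons j c') = φ (Fin.cons j c) * φ (Fin.cons j c') := by
      intro j
      refine ih (fun c => ψ (Fin.cons j c)) (fun c => φ (Fin.cons j c))
        (fun c => hψr _) (fun c => hφr _) ?_
      intro α b
      have hh := h (Fin.cons false α) (Fin.cons j b)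
      rw [umeas_mulVec_cons, umeas_mulVec_cons] at hh
      simpa [Matrix.one_apply, ite_mul, Finset.sum_ite_eq] using hh
    -- linearity of mulVec on sums/differences
    have hadd : ∀ (α : Fin n → Bool) (x y : (Fin n → Fin 2) → ℂ) (b : Fin n → Fin 2),
        (Umeas n α).mulVec (fun c => x c + y c) b
          = (Umeas n α).mulVec x b + (Umeas n α).mulVec y b := by
      intro α x y b
      simp [Matrix.mulVec, dotProduct, mul_add, Finset.sum_add_distrib]
    have hsub : ∀ (α : Fin n → Bool) (x y : (Fin n → Fin 2) → ℂ) (b : Fin n → Fin 2),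
        (Umeas n α).mulVec (fun c => x c - y c) b
          = (Umeas n α).mulVec x b - (Umeas n α).mulVec y b := by
      intro α x y b
      simp [Matrix.mulVec, dotProduct, mul_sub, Finset.sum_sub_distrib]
    -- Hadamard rows
    have hX0 : ∀ (α : Fin n → Bool) (b : Fin n → Fin 2) (χ : (Fin (n+1) → Fin 2) → ℂ),
        (Umeas (n+1) (Fin.cons true α)).mulVec χ (Fin.cons 0 b)
          = ((Real.sqrt 2 : ℂ))⁻¹ *
            (Umeas n α).mulVec (fun c => χ (Fin.cons 0 c) + χ (Fin.cons 1 c)) b := by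
      intro α b χ
      rw [umeas_mulVec_cons, hadd]
      norm_num [Fin.sum_univ_two, Hm, Matrix.smul_apply, Matrix.cons_val_zero,
        Matrix.cons_val_one, Matrix.head_cons]
      ring
    have hX1 : ∀ (α : Fin n → Bool) (b : Fin n → Fin 2) (χ : (Fin (n+1) → Fin 2) → ℂ),
        (Umeas (n+1) (Fin.cons true α)).mulVec χ (Fin.cons 1 b)
          = ((Real.sqrt 2 : ℂ))⁻¹ *
            (Umeas n α).mulVec (fun c => χ (Fin.cons 0 c) - χ (Fin.cons 1 c)) b := by
      intro α b χ
      rw [umeas_mulVec_cons, hsub]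
      norm_num [Fin.sum_univ_two, Hm, Matrix.smul_apply, Matrix.cons_val_zero,
        Matrix.cons_val_one, Matrix.head_cons]
      ring
    -- sum/difference vectors satisfy the hypothesis
    have hplus : ∀ (α : Fin n → Bool) (b : Fin n → Fin 2),
        Complex.normSq ((Umeas n α).mulVec (fun c => ψ (Fin.cons 0 c) + ψ (Fin.cons 1 c)) b)
          = Complex.normSq ((Umeas n α).mulVec (fun c => φ (Fin.cons 0 c) + φ (Fin.cons 1 c)) b) := by
      intro α b
      have hh := h (Fin.cons true α) (Fin.cons 0 b)
      rw [hX0, hX0, normSq_sqrt2_inv_mul, normSq_sqrt2_inv_mul] at hh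
      exact mul_left_cancel₀ (by norm_num : (1/2 : ℝ) ≠ 0) hh
    have hminus : ∀ (α : Fin n → Bool) (b : Fin n → Fin 2),
        Complex.normSq ((Umeas n α).mulVec (fun c => ψ (Fin.cons 0 c) - ψ (Fin.cons 1 c)) b)
          = Complex.normSq ((Umeas n α).mulVec (fun c => φ (Fin.cons 0 c) - φ (Fin.cons 1 c)) b) := by
      intro α b
      have hh := h (Fin.cons true α) (Fin.cons 1 b)
      rw [hX1, hX1, normSq_sqrt2_inv_mul, normSq_sqrt2_inv_mul] at hh
      exact mul_left_cancel₀ (by norm_num : (1/2 : ℝ) ≠ 0) hh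
    have eplus := ih (fun c => ψ (Fin.cons 0 c) + ψ (Fin.cons 1 c))
      (fun c => φ (Fin.cons 0 c) + φ (Fin.cons 1 c))
      (fun c => by simp [Complex.add_im, hψr]) (fun c => by simp [Complex.add_im, hφr]) hplus
    have eminus := ih (fun c => ψ (Fin.cons 0 c) - ψ (Fin.cons 1 c))
      (fun c => φ (Fin.cons 0 c) - φ (Fin.cons 1 c))
      (fun c => by simp [Complex.sub_im, hψr]) (fun c => by simp [Complex.sub_im, hφr]) hminus
    -- symmetrized cross term
    have h3 : ∀ c c', ψ (Fin.cons 0 c) * ψ (Fin.cons 1 c') + ψ (Fin.cons 1 c) * ψ (Fin.cons 0 c')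
        = φ (Fin.cons 0 c) * φ (Fin.cons 1 c') + φ (Fin.cons 1 c) * φ (Fin.cons 0 c') := by
      intro c c'
      have e1 := eplus c c'
      have e2 := eminus c c'
      linear_combination (e1 - e2) / 2
    have ecross := key_alg (fun c => ψ (Fin.cons 0 c)) (fun c => ψ (Fin.cons 1 c))
      (fun c => φ (Fin.cons 0 c)) (fun c => φ (Fin.cons 1 c))
      (hdiag 0) (hdiag 1) h3
    have main : ∀ (k k' : Fin 2) (c c' : Fin n → Fin 2),
        ψ (Fin.cons k c) * ψ (Fin.cons k' c') = φ (Fin.cons k c) * φ (Fin.cons k' c') := by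
      intro k k' c c'
      have ec : ∀ c c', ψ (Fin.cons 0 c) * ψ (Fin.cons 1 c')
          = φ (Fin.cons 0 c) * φ (Fin.cons 1 c') := fun c c' => ecross c c'
      rcases fin2_cases k with rfl | rfl <;> rcases fin2_cases k' with rfl | rfl
      · exact hdiag 0 c c'
      · exact ec c c'
      · linear_combination ec c' c
      · exact hdiag 1 c c'
    intro b b'
    have := main (b 0) (b' 0) (Fin.tail b) (Fin.tail b')
    simpa [Fin.cons_self_tail] using this

/-- Tomographic completeness of random-XZ measurements on real pure states: if two
real unit vectors give the same outcome probabilities `|⟨b|U|ψ⟩|²` for every product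
XZ unitary `U` and bit-string `b`, then `|ψ⟩⟨ψ| = |φ⟩⟨φ|`. -/
theorem stmt6 (n : ℕ) (ψ φ : (Fin n → Fin 2) → ℂ)
    (hψu : ∑ b, Complex.normSq (ψ b) = 1) (hφu : ∑ b, Complex.normSq (φ b) = 1)
    (hψr : ∀ b, (ψ b).im = 0) (hφr : ∀ b, (φ b).im = 0)
    (h : ∀ α : Fin n → Bool, ∀ b : Fin n → Fin 2,
      Complex.normSq ((Umeas n α).mulVec ψ b) = Complex.normSq ((Umeas n α).mulVec φ b)) :
    Matrix.vecMulVec ψ (star ψ) = Matrix.vecMulVec φ (star φ) := by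
  have key := aux n ψ φ hψr hφr h
  funext b b'
  simp only [Matrix.vecMulVec_apply, Pi.star_apply]
  rw [Complex.star_def, Complex.conj_eq_iff_im.mpr (hψr b'),
    Complex.conj_eq_iff_im.mpr (hφr b')]
  exact key b b'
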